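/- Let X be a completely regular Hausdorff (Tychonoff) space and let H be a non-vanishing closed ideal of C_B(X). Then the following are equivalent: (1) sp(H) is pseudocompact; (2) H has no subideal of the form ⨁_{i∈I} H_i (an internal direct sum) where {H_i : i ∈ I} is an infinite faithfully indexed collection of closed subideals of H such that for every maximal closed subideal M of H there exists f ∈ H \ M with ⟨f⟩ ∩ H_i = 0 for all but at most one i ∈ I. -/

import Mathlib

open BoundedContinuousFunction Set Filter Topology

section Preamble

variable {X : Type*} [TopologicalSpace X] {𝕜 : Type*} [RCLike 𝕜]

theorem betaExt_aux (f : X →ᵇ 𝕜) :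
    Continuous (fun x => (⟨f x, by
      simpa [Metric.mem_closedBall, dist_zero_right] using f.norm_coe_le_norm x⟩ :
        Metric.closedBall (0 : 𝕜) ‖f‖)) :=
  f.continuous.subtype_mk _

/-- `f_β`, the unique continuous extension of a bounded continuous function `f : X → 𝕜` to the
Stone–Čech compactification `βX`. -/
noncomputable def betaExt (f : X →ᵇ 𝕜) : StoneCech X → 𝕜 :=
  haveI : CompactSpace (Metric.closedBall (0 : 𝕜) ‖f‖) :=
    isCompact_iff_compactSpace.mp (isCompact_closedBall 0 ‖f‖)
  fun p => (stoneCechExtend (betaExt_aux f) p).1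

theorem betaExt_unit (f : X →ᵇ 𝕜) (x : X) : betaExt f (stoneCechUnit x) = f x := by
  haveI : CompactSpace (Metric.closedBall (0 : 𝕜) ‖f‖) :=
    isCompact_iff_compactSpace.mp (isCompact_closedBall 0 ‖f‖)
  exact congrArg Subtype.val (congrFun (stoneCechExtend_extends (betaExt_aux f)) x)

theorem continuous_betaExt (f : X →ᵇ 𝕜) : Continuous (betaExt f) := by
  haveI : CompactSpace (Metric.closedBall (0 : 𝕜) ‖f‖) :=
    isCompact_iff_compactSpace.mp (isCompact_closedBall 0 ‖f‖)
  exact continuous_subtype_val.comp (continuous_stoneCechExtend _)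

/-- `λ_G X`, the union over `g ∈ G` of the cozero-sets in `βX` of the extensions `g_β`. -/
def lambdaSet (G : Ideal (X →ᵇ 𝕜)) : Set (StoneCech X) :=
  ⋃ g ∈ G, {p | betaExt g p ≠ 0}

end Preamble

/-- A space is pseudocompact if every continuous real-valued function on it is bounded. -/
def Pseudocompact (Y : Type*) [TopologicalSpace Y] : Prop :=
  ∀ f : C(Y, ℝ), ∃ M : ℝ, ∀ y : Y, |f y| ≤ M

universe u


set_option linter.unusedSectionVars false
set_option linter.unusedVariables false
set_option maxHeartbeats 1000000

/-- The "bad family" condition, abstracted over the ring. -/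
def Cond {R : Type*} [CommRing R] [TopologicalSpace R] (H : Ideal R) : Prop :=
  ∃ (I : Type u) (Hi : I → Ideal R),
    Infinite I ∧ Function.Injective Hi ∧
    
    (∀ i, IsClosed ((Hi i : Set R))) ∧ (∀ i, Hi i ≤ H) ∧
    (∀ i₀ : I, Hi i₀ ⊓ (⨆ i ∈ {i : I | i ≠ i₀}, Hi i) = ⊥) ∧
    (∀ M : Ideal R, IsClosed (M : Set R) → M ≤ H → M ≠ H →
      (∀ N : Ideal R,
        IsClosed (N : Set R) → N ≤ H → N ≠ H → M ≤ N → N = M) →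
      ∃ f ∈ H, f ∉ M ∧
        {i : I | Ideal.span {f} ⊓ Hi i ≠ ⊥}.Subsingleton)

section Transfer

variable {A B : Type*} [CommRing A] [CommRing B] [TopologicalSpace A] [TopologicalSpace B]

/-- Along a ring equivalence that is also a homeomorphism, `Cond` transfers. -/
theorem cond_map (e : A ≃+* B) (hec : Continuous e) (hec' : Continuous e.symm)
    (H : Ideal A) (h : Cond.{u} H) : Cond.{u} (Ideal.map (e : A →+* B) H) := by
  classical
  obtain ⟨I, Hi, hinf, hinj, hcl, hle, hdir, hmax⟩ := h
  -- the order isomorphism on ideals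
  let Φ : Ideal A ≃o Ideal B :=
    Ideal.relIsoOfBijective (e.symm : B →+* A) e.symm.bijective
  have hΦ : ∀ J : Ideal A, Φ J = Ideal.map (e : A →+* B) J := by
    intro J
    show Ideal.comap (e.symm : B →+* A) J = _
    exact Ideal.comap_symm e
  have hΦmem : ∀ (J : Ideal A) (b : B), b ∈ Φ J ↔ e.symm b ∈ J := fun J b => Iff.rfl
  have hΦset : ∀ J : Ideal A, ((Φ J : Ideal B) : Set B) = e.symm ⁻¹' (J : Set A) :=
    fun J => rfl
  have hΦsymm : ∀ (M' : Ideal B) (a : A), a ∈ Φ.symm M' ↔ e a ∈ M' := by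
    intro M' a
    conv_rhs => rw [← Φ.apply_symm_apply M']
    rw [hΦmem, RingEquiv.symm_apply_apply]
  refine ⟨I, fun i => Φ (Hi i), hinf, fun i j hij => hinj (Φ.injective hij), ?_, ?_, ?_, ?_⟩
  · intro i
    rw [hΦset]
    exact IsClosed.preimage hec' (hcl i)
  · intro i
    show Φ (Hi i) ≤ _
    rw [← hΦ H]
    exact Φ.monotone (hle i)
  · intro i₀
    show Φ (Hi i₀) ⊓ (⨆ i ∈ {i : I | i ≠ i₀}, Φ (Hi i)) = ⊥
    have : (⨆ i ∈ {i : I | i ≠ i₀}, Φ (Hi i)) = Φ (⨆ i ∈ {i : I | i ≠ i₀}, Hi i) := by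
      rw [Φ.map_iSup]
      exact iSup_congr fun i => (Φ.map_iSup _).symm
    rw [this, ← Φ.map_inf, hdir i₀, Φ.map_bot]
  · intro M' hM'cl hM'le hM'ne hM'max
    set M : Ideal A := Φ.symm M' with hM
    have hMset : (M : Set A) = e ⁻¹' (M' : Set B) := Set.ext fun a => hΦsymm M' a
    have hMcl : IsClosed (M : Set A) := hMset ▸ IsClosed.preimage hec hM'cl
    have hMle : M ≤ H := by
      have := Φ.symm.monotone hM'le
      rwa [← hΦ H, Φ.symm_apply_apply] at this
    have hMne : M ≠ H := by
      intro hMH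
      apply hM'ne
      rw [← Φ.apply_symm_apply M', ← hM, hMH, hΦ]
    have hMmax : ∀ N : Ideal A, IsClosed (N : Set A) → N ≤ H → N ≠ H → M ≤ N → N = M := by
      intro N hNcl hNle hNne hMN
      have h1 : IsClosed ((Φ N : Ideal B) : Set B) := by
        rw [hΦset]; exact IsClosed.preimage hec' hNcl
      have h2 : Φ N ≤ Ideal.map (e : A →+* B) H := by rw [← hΦ H]; exact Φ.monotone hNle
      have h3 : Φ N ≠ Ideal.map (e : A →+* B) H := by
        rw [← hΦ H]; exact fun hh => hNne (Φ.injective hh)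
      have h4 : M' ≤ Φ N := by
        have := Φ.monotone hMN
        rwa [hM, Φ.apply_symm_apply] at this
      have := hM'max (Φ N) h1 h2 h3 h4
      rw [← Φ.symm_apply_apply N, this]
    obtain ⟨f, hfH, hfM, hfsub⟩ := hmax M hMcl hMle hMne hMmax
    refine ⟨e f, ?_, ?_, ?_⟩
    · exact Ideal.mem_map_of_mem _ hfH
    · intro hc
      exact hfM ((hΦsymm M' f).mpr hc)
    · have hspan : Ideal.span {e f} = Φ (Ideal.span {f}) := by
        rw [hΦ, Ideal.map_span, Set.image_singleton]
        rfl
      have hseteq : {i : I | Ideal.span {e f} ⊓ Φ (Hi i) ≠ ⊥} =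
          {i : I | Ideal.span {f} ⊓ Hi i ≠ ⊥} := by
        ext i
        simp only [Set.mem_setOf_eq, hspan, ← Φ.map_inf]
        constructor
        · intro h hb; exact h (by rw [hb, Φ.map_bot])
        · intro h hb; exact h (by rw [← Φ.map_bot] at hb; exact Φ.injective hb)
      show {i : I | Ideal.span {e f} ⊓ Φ (Hi i) ≠ ⊥}.Subsingleton
      rw [hseteq]
      exact hfsub

end Transfer


section Core
open ContinuousMap

variable {Q : Type*} [TopologicalSpace Q] [CompactSpace Q] [T2Space Q]
variable {𝕜 : Type*} [RCLike 𝕜]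

lemma idealOfSet_mono' {s t : Set Q} (h : s ⊆ t) : idealOfSet 𝕜 s ≤ idealOfSet 𝕜 t :=
  fun f hf => mem_idealOfSet.mpr fun x hx => mem_idealOfSet.mp hf fun hxs => hx (h hxs)

lemma setOfIdeal_mono' {I J : Ideal C(Q, 𝕜)} (h : I ≤ J) : setOfIdeal I ⊆ setOfIdeal J := by
  intro x hx
  obtain ⟨f, hfI, hfx⟩ := mem_setOfIdeal.mp hx
  exact mem_setOfIdeal.mpr ⟨f, h hfI, hfx⟩

lemma exists_fun_vanish (U : Set Q) (hU : IsOpen U) {p : Q} (hp : p ∈ U) :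
    ∃ f : C(Q, 𝕜), (∀ x, x ∉ U → f x = 0) ∧ f p = 1 := by
  obtain ⟨g, hg0, hg1, -⟩ := exists_continuous_zero_one_of_isClosed hU.isClosed_compl
    isClosed_singleton (Set.disjoint_singleton_right.mpr fun h => h hp)
  refine ⟨⟨fun x => (g x : 𝕜), RCLike.continuous_ofReal.comp g.continuous⟩, ?_, ?_⟩
  · intro x hx
    simp only [ContinuousMap.coe_mk]
    rw [hg0 hx]
    simp
  · simp only [ContinuousMap.coe_mk]
    rw [hg1 rfl]
    simp

/-- The ideal of functions in `H'` vanishing at `p` is a maximal closed subideal. -/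
lemma Mp_is_max (H' : Ideal C(Q, 𝕜)) (hcl : IsClosed ((H' : Set C(Q, 𝕜)))) {p : Q}
    (hp : p ∈ setOfIdeal H') :
    IsClosed ((idealOfSet 𝕜 (setOfIdeal H' \ {p}) : Set C(Q, 𝕜))) ∧
    idealOfSet 𝕜 (setOfIdeal H' \ {p}) ≤ H' ∧
    idealOfSet 𝕜 (setOfIdeal H' \ {p}) ≠ H' ∧
    ∀ N : Ideal C(Q, 𝕜), IsClosed (N : Set C(Q, 𝕜)) → N ≤ H' → N ≠ H' →
      idealOfSet 𝕜 (setOfIdeal H' \ {p}) ≤ N → N = idealOfSet 𝕜 (setOfIdeal H' \ {p}) := by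
  have hHeq : idealOfSet 𝕜 (setOfIdeal H') = H' := idealOfSet_ofIdeal_isClosed hcl
  refine ⟨idealOfSet_closed 𝕜 _, ?_, ?_, ?_⟩
  · exact le_trans (idealOfSet_mono' Set.diff_subset) hHeq.le
  · intro hcontra
    obtain ⟨f, hfH, hfp⟩ := mem_setOfIdeal.mp hp
    rw [← hcontra] at hfH
    exact hfp (mem_idealOfSet.mp hfH (fun h => h.2 rfl))
  · intro N hNcl hNle hNne hMpN
    have hNeq : idealOfSet 𝕜 (setOfIdeal N) = N := idealOfSet_ofIdeal_isClosed hNcl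
    have hopen : IsOpen (setOfIdeal H' \ {p}) :=
      (setOfIdeal_open H').sdiff isClosed_singleton
    have h1 : setOfIdeal H' \ {p} ⊆ setOfIdeal N := by
      have := setOfIdeal_mono' hMpN
      rwa [setOfIdeal_ofSet_of_isOpen 𝕜 hopen] at this
    have h2 : setOfIdeal N ⊆ setOfIdeal H' := setOfIdeal_mono' hNle
    have h3 : p ∉ setOfIdeal N := by
      intro hpN
      apply hNne
      have heq : setOfIdeal N = setOfIdeal H' := by
        refine subset_antisymm h2 fun x hx => ?_
        by_cases hxp : x = p
        · exact hxp ▸ hpN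
        · exact h1 ⟨hx, hxp⟩
      rw [← hNeq, heq, hHeq]
    have h4 : setOfIdeal N = setOfIdeal H' \ {p} :=
      subset_antisymm (fun x hx => ⟨h2 hx, fun hxp => h3 (hxp ▸ hx)⟩) h1
    rw [← hNeq, h4]

lemma not_pseudo_of_cond (H' : Ideal C(Q, 𝕜)) (hcl : IsClosed ((H' : Set C(Q, 𝕜))))
    (hc : Cond.{u} H') : ¬ Pseudocompact (setOfIdeal H') := by
  classical
  obtain ⟨I, Hi, hinf, hinj, hicl, hile, hdir, hmax⟩ := hc
  have hHeq : idealOfSet 𝕜 (setOfIdeal H') = H' := idealOfSet_ofIdeal_isClosed hcl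
  set lam : Set Q := setOfIdeal H' with hlam
  set U : I → Set Q := fun i => setOfIdeal (Hi i) with hU
  have hUopen : ∀ i, IsOpen (U i) := fun i => setOfIdeal_open (Hi i)
  have hUsub : ∀ i, U i ⊆ lam := fun i => setOfIdeal_mono' (hile i)
  -- pairwise disjointness
  have hdisj : ∀ i j, i ≠ j → ∀ x, x ∈ U i → x ∉ U j := by
    intro i j hij x hxi hxj
    obtain ⟨f, hfI, hfx⟩ := mem_setOfIdeal.mp hxi
    obtain ⟨g, hgI, hgx⟩ := mem_setOfIdeal.mp hxj
    have hfg : f * g ∈ Hi i ⊓ (⨆ k ∈ {k : I | k ≠ i}, Hi k) := by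
      constructor
      · exact Ideal.mul_mem_right _ _ hfI
      · have hj : Hi j ≤ ⨆ k ∈ {k : I | k ≠ i}, Hi k :=
          le_biSup _ (show j ∈ {k : I | k ≠ i} from fun h => hij h.symm)
        exact hj (Ideal.mul_mem_left _ _ hgI)
    rw [hdir i, Ideal.mem_bot] at hfg
    have : (f * g) x = 0 := by rw [hfg]; rfl
    rw [ContinuousMap.mul_apply] at this
    exact hfx (by
      rcases mul_eq_zero.mp this with h | h
      · exact h
      · exact absurd h hgx)
  -- infinitely many of the `U i` are nonempty
  have hbotsub : {i : I | U i = ∅}.Subsingleton := by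
    intro i hi j hj
    have hib : Hi i = ⊥ := by
      have := idealOfSet_ofIdeal_isClosed (hicl i)
      rw [show setOfIdeal (Hi i) = (∅ : Set Q) from hi] at this
      rw [← this, idealOfEmpty_eq_bot]
    have hjb : Hi j = ⊥ := by
      have := idealOfSet_ofIdeal_isClosed (hicl j)
      rw [show setOfIdeal (Hi j) = (∅ : Set Q) from hj] at this
      rw [← this, idealOfEmpty_eq_bot]
    exact hinj (hib.trans hjb.symm)
  have hNEinf : {i : I | (U i).Nonempty}.Infinite := by
    have hfin : {i : I | U i = ∅}.Finite := hbotsub.finite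
    have : {i : I | (U i).Nonempty} = {i : I | U i = ∅}ᶜ := by
      ext i
      simp [Set.nonempty_iff_ne_empty]
    rw [this]
    exact hfin.infinite_compl
  -- an injective enumeration of nonempty `U`s
  let em := hNEinf.natEmbedding
  let idx : ℕ → I := fun n => (em n).1
  have hidxinj : Function.Injective idx := fun n m h => by
    have : em n = em m := Subtype.ext h
    exact em.injective this
  have hidxne : ∀ n, (U (idx n)).Nonempty := fun n => (em n).2
  choose x hx using hidxne
  -- Urysohn functions
  have hfn : ∀ n : ℕ, ∃ fn : C(Q, ℝ), (∀ z, z ∉ U (idx n) → fn z = 0) ∧ fn (x n) = 1 := by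
    intro n
    exact exists_fun_vanish (U (idx n)) (hUopen (idx n)) (hx n)
  choose fn hfn0 hfn1 using hfn
  -- the candidate unbounded function
  set g : lam → ℝ := fun z => ∑' n : ℕ, (n : ℝ) * fn n (z : Q) with hg
  have haux : ∀ (z : Q) (m : ℕ), z ∈ U (idx m) → ∀ n, n ≠ m → fn n z = 0 := by
    intro z m hzm n hnm
    exact hfn0 n z (hdisj (idx m) (idx n) (fun h => hnm (hidxinj h).symm) z hzm)
  have gval1 : ∀ (z : Q) (m : ℕ), z ∈ U (idx m) →
      (∑' n : ℕ, (n : ℝ) * fn n z) = (m : ℝ) * fn m z := by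
    intro z m hzm
    exact tsum_eq_single m (fun n hn => by rw [haux z m hzm n hn, mul_zero])
  have gval0 : ∀ z : Q, (∀ m : ℕ, z ∉ U (idx m)) → (∑' n : ℕ, (n : ℝ) * fn n z) = 0 := by
    intro z hz
    rw [tsum_eq_single 0 (fun n hn => by rw [hfn0 n z (hz n), mul_zero])]
    simp
  -- continuity
  have hgc : Continuous g := by
    rw [continuous_iff_continuousAt]
    intro p
    have hpmem : (p : Q) ∈ setOfIdeal H' := p.2
    obtain ⟨hMpcl, hMple, hMpne, hMpmax⟩ := Mp_is_max H' hcl hpmem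
    obtain ⟨f, hfH, hfMp, hfsub⟩ :=
      hmax (idealOfSet 𝕜 (setOfIdeal H' \ {(p : Q)})) hMpcl hMple hMpne hMpmax
    have hfp : f (p : Q) ≠ 0 := by
      intro hz
      apply hfMp
      rw [mem_idealOfSet]
      intro y hy
      by_cases hyl : y ∈ setOfIdeal H'
      · have : y = (p : Q) := by
          by_contra hne
          exact hy ⟨hyl, hne⟩
        rw [this]; exact hz
      · rw [← hHeq] at hfH
        exact mem_idealOfSet.mp hfH hyl
    set W : Set Q := {y : Q | f y ≠ 0} with hW
    have hWopen : IsOpen W := by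
      have : W = f ⁻¹' ({0}ᶜ) := rfl
      rw [this]
      exact (map_continuous f).isOpen_preimage _ isOpen_compl_singleton
    have hWU : ∀ i, Ideal.span {f} ⊓ Hi i = ⊥ → ∀ y, y ∈ W → y ∉ U i := by
      intro i hbot y hyW hyU
      obtain ⟨h, hhI, hhy⟩ := mem_setOfIdeal.mp hyU
      have hmem : h * f ∈ Ideal.span {f} ⊓ Hi i := by
        constructor
        · exact Ideal.mem_span_singleton'.mpr ⟨h, rfl⟩
        · exact Ideal.mul_mem_right _ _ hhI
      rw [hbot, Ideal.mem_bot] at hmem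
      have : (h * f) y = 0 := by rw [hmem]; rfl
      rw [ContinuousMap.mul_apply] at this
      rcases mul_eq_zero.mp this with h1 | h1
      · exact hhy h1
      · exact hyW h1
    have hVmem : (Subtype.val ⁻¹' W : Set lam) ∈ 𝓝 p :=
      (hWopen.preimage continuous_subtype_val).mem_nhds hfp
    by_cases hcase : ∃ m : ℕ, Ideal.span {f} ⊓ Hi (idx m) ≠ ⊥
    · obtain ⟨m, hm⟩ := hcase
      have hother : ∀ n : ℕ, n ≠ m → Ideal.span {f} ⊓ Hi (idx n) = ⊥ := by
        intro n hnm
        by_contra hbot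
        exact hnm (hidxinj (hfsub hbot hm))
      have hcmul : Continuous (fun z : lam => (m : ℝ) * fn m (z : Q)) :=
        continuous_const.mul ((map_continuous (fn m)).comp continuous_subtype_val)
      refine ContinuousAt.congr hcmul.continuousAt ?_
      filter_upwards [hVmem] with z hz
      show (m : ℝ) * fn m (z : Q) = g z
      by_cases hzU : (z : Q) ∈ U (idx m)
      · rw [hg]; exact (gval1 (z : Q) m hzU).symm
      · have hznone : ∀ n : ℕ, (z : Q) ∉ U (idx n) := by
          intro n
          by_cases hnm : n = m
          · rw [hnm]; exact hzU
          · exact hWU (idx n) (hother n hnm) (z : Q) hz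
        rw [hg]
        show (m : ℝ) * fn m (z : Q) = ∑' n : ℕ, (n : ℝ) * fn n (z : Q)
        rw [gval0 (z : Q) hznone, hfn0 m (z : Q) hzU, mul_zero]
    · push_neg at hcase
      refine ContinuousAt.congr (continuousAt_const (y := (0 : ℝ))) ?_
      filter_upwards [hVmem] with z hz
      show (0 : ℝ) = g z
      have hznone : ∀ n : ℕ, (z : Q) ∉ U (idx n) := fun n =>
        hWU (idx n) (hcase n) (z : Q) hz
      rw [hg]
      exact (gval0 (z : Q) hznone).symm
  -- unboundedness
  intro hps
  obtain ⟨M, hM⟩ := hps ⟨g, hgc⟩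
  obtain ⟨n, hn⟩ := exists_nat_gt M
  have hxl : x n ∈ lam := hUsub (idx n) (hx n)
  have hval : g ⟨x n, hxl⟩ = (n : ℝ) := by
    rw [hg]
    show (∑' k : ℕ, (k : ℝ) * fn k (x n)) = (n : ℝ)
    rw [gval1 (x n) n (hx n), hfn1 n, mul_one]
  have := hM ⟨x n, hxl⟩
  rw [ContinuousMap.coe_mk, hval] at this
  rw [abs_of_nonneg (Nat.cast_nonneg n)] at this
  linarith


lemma cond_of_not_pseudo (H' : Ideal C(Q, 𝕜)) (hcl : IsClosed ((H' : Set C(Q, 𝕜))))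
    (h : ¬ Pseudocompact (setOfIdeal H')) : Cond.{u} H' := by
  classical
  have hHeq : idealOfSet 𝕜 (setOfIdeal H') = H' := idealOfSet_ofIdeal_isClosed hcl
  set lam : Set Q := setOfIdeal H' with hlam
  rw [Pseudocompact] at h
  push_neg at h
  obtain ⟨g, hg⟩ := h
  -- a sequence of points with rapidly growing values
  have hstep : ∀ z : lam, ∃ w : lam, |g z| + 2 < |g w| := fun z => hg (|g z| + 2)
  choose step hstep using hstep
  obtain ⟨z0, hz0⟩ := hg 0
  set y : ℕ → lam := fun n => Nat.rec z0 (fun _ w => step w) n with hy'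
  have hy : ∀ n, |g (y n)| + 2 < |g (y (n + 1))| := fun n => hstep (y n)
  set r : ℕ → ℝ := fun n => |g (y n)| with hr
  have hgap : ∀ n m, n < m → r n + 2 < r m := by
    intro n m hnm
    induction m with
    | zero => omega
    | succ k ih =>
      rcases Nat.lt_succ_iff_lt_or_eq.mp hnm with h' | h'
      · have h2 := hy k
        have h3 := ih h'
        have : (0:ℝ) ≤ r k := abs_nonneg _
        calc r n + 2 < r k := h3
        _ < r k + 2 := by linarith
        _ < r (k+1) := hy k
      · subst h'
        exact hy n
  have hgap2 : ∀ n m, n ≠ m → 2 < dist (r n) (r m) := by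
    intro n m hnm
    rw [Real.dist_eq]
    rcases lt_or_gt_of_ne hnm with h' | h'
    · have := hgap n m h'
      rw [abs_sub_comm, abs_of_pos (by linarith)]
      linarith
    · have := hgap m n h'
      rw [abs_of_pos (by linarith)]
      linarith
  -- the open sets
  have hgabs : Continuous (fun z : lam => |g z|) := (map_continuous g).abs
  set V : ℕ → Set lam := fun n => (fun z : lam => |g z|) ⁻¹' Metric.ball (r n) (1/2) with hV
  have hVopen : ∀ n, IsOpen (V n) := fun n => Metric.isOpen_ball.preimage hgabs
  set U : ℕ → Set Q := fun n => Subtype.val '' V n with hUdef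
  have hlamopen : IsOpen lam := setOfIdeal_open H'
  have hUopen : ∀ n, IsOpen (U n) := fun n => hlamopen.isOpenMap_subtype_val _ (hVopen n)
  have hUsub : ∀ n, U n ⊆ lam := by
    rintro n x ⟨z, hz, rfl⟩
    exact z.2
  have hymem : ∀ n, ((y n : Q)) ∈ U n := fun n =>
    ⟨y n, by simp [hV, hr, Metric.mem_ball, dist_self], rfl⟩
  have hmemU : ∀ (n : ℕ) (x : Q), x ∈ U n → ∀ z : lam, (z : Q) = x →
      dist (|g z|) (r n) < 1/2 := by
    rintro n x ⟨w, hw, rfl⟩ z hz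
    have hzw : z = w := Subtype.ext hz
    rw [hzw]
    exact hw
  have hUdisj : ∀ n m, n ≠ m → ∀ x, x ∈ U n → x ∉ U m := by
    rintro n m hnm x hxn ⟨w, hw, hwx⟩
    have h1 : dist (|g w|) (r n) < 1/2 := hmemU n x hxn w hwx
    have h2 : dist (|g w|) (r m) < 1/2 := hw
    have h3 : dist (r n) (r m) ≤ dist (r n) (|g w|) + dist (|g w|) (r m) := dist_triangle _ _ _
    have h4 : dist (r n) (|g w|) = dist (|g w|) (r n) := dist_comm _ _
    have := hgap2 n m hnm
    linarith
  -- the ideals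
  set Hi : ULift.{u} ℕ → Ideal C(Q, 𝕜) := fun i => idealOfSet 𝕜 (U i.down) with hHi
  refine ⟨ULift.{u} ℕ, Hi, inferInstance, ?_, ?_, ?_, ?_, ?_⟩
  · -- injective
    intro i j hij
    have : U i.down = U j.down := by
      rw [← setOfIdeal_ofSet_of_isOpen 𝕜 (hUopen i.down),
        ← setOfIdeal_ofSet_of_isOpen 𝕜 (hUopen j.down)]
      exact congrArg setOfIdeal hij
    by_contra hij'
    have hne : i.down ≠ j.down := fun hdd => hij' (ULift.ext i j hdd)
    exact hUdisj i.down j.down hne _ (hymem i.down) (this ▸ hymem i.down)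
  · exact fun i => idealOfSet_closed 𝕜 _
  · intro i
    rw [← hHeq]
    exact idealOfSet_mono' (hUsub i.down)
  · -- directness
    intro i₀
    rw [eq_bot_iff]
    intro h hh
    obtain ⟨hh1, hh2⟩ := Submodule.mem_inf.mp hh
    have hle2 : (⨆ i ∈ {i : ULift.{u} ℕ | i ≠ i₀}, Hi i) ≤ idealOfSet 𝕜 ((U i₀.down)ᶜ) := by
      refine iSup₂_le fun i hi => idealOfSet_mono' ?_
      intro x hx
      exact hUdisj i.down i₀.down (fun hdd => hi (ULift.ext i i₀ hdd)) x hx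
    have hh2' := hle2 hh2
    rw [Ideal.mem_bot]
    ext x
    simp only [ContinuousMap.zero_apply]
    by_cases hxU : x ∈ U i₀.down
    · exact mem_idealOfSet.mp hh2' (by simpa using hxU)
    · exact mem_idealOfSet.mp hh1 hxU
  · -- the maximal subideal condition
    intro M hMcl hMle hMne hMmax
    have hMeq : idealOfSet 𝕜 (setOfIdeal M) = M := idealOfSet_ofIdeal_isClosed hMcl
    have hVsub : setOfIdeal M ⊆ lam := setOfIdeal_mono' hMle
    have hVne : setOfIdeal M ≠ lam := by
      intro heq
      apply hMne
      rw [← hMeq, heq, hHeq]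
    obtain ⟨p, hp, hpV⟩ := Set.exists_of_ssubset (ssubset_of_subset_of_ne hVsub hVne)
    obtain ⟨hMpcl, hMple, hMpne, hMpmax⟩ := Mp_is_max H' hcl hp
    have hMMp : M ≤ idealOfSet 𝕜 (lam \ {p}) := by
      rw [← hMeq]
      exact idealOfSet_mono' (fun x hx => ⟨hVsub hx, fun hxp => hpV (hxp ▸ hx)⟩)
    have hMp_eq_M : idealOfSet 𝕜 (lam \ {p}) = M :=
      hMmax _ hMpcl hMple hMpne hMMp
    -- the neighborhood W of p
    set zp : lam := ⟨p, hp⟩ with hzp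
    set c : ℝ := |g zp| with hc
    set W : Set Q := Subtype.val '' ((fun w : lam => |g w|) ⁻¹' Metric.ball c (1/2)) with hWdef
    have hWopen : IsOpen W :=
      hlamopen.isOpenMap_subtype_val _ (Metric.isOpen_ball.preimage hgabs)
    have hpW : p ∈ W := ⟨zp, by simp [hc, Metric.mem_ball, dist_self], rfl⟩
    have hWsub : W ⊆ lam := by
      rintro x ⟨w, hw, rfl⟩
      exact w.2
    obtain ⟨f, hf0, hf1⟩ := exists_fun_vanish (𝕜 := 𝕜) W hWopen hpW
    have hfH : f ∈ H' := by
      rw [← hHeq]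
      exact idealOfSet_mono' hWsub (mem_idealOfSet.mpr fun x hx => hf0 x hx)
    have hWU : ∀ n : ℕ, (∃ x, x ∈ W ∧ x ∈ U n) → dist (r n) c < 1 := by
      rintro n ⟨x, ⟨w, hw, rfl⟩, hxU⟩
      have h1 : dist (|g w|) (r n) < 1/2 := hmemU n _ hxU w rfl
      have h2 : dist (|g w|) c < 1/2 := hw
      have h3 : dist (r n) c ≤ dist (r n) (|g w|) + dist (|g w|) c := dist_triangle _ _ _
      have h4 : dist (r n) (|g w|) = dist (|g w|) (r n) := dist_comm _ _
      linarith
    refine ⟨f, hfH, ?_, ?_⟩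
    · intro hfM
      rw [← hMp_eq_M] at hfM
      have : f p = 0 := mem_idealOfSet.mp hfM (fun hmem => hmem.2 rfl)
      rw [this] at hf1
      exact zero_ne_one hf1
    · -- subsingleton
      intro i hi j hj
      simp only [Set.mem_setOf_eq] at hi hj
      have key : ∀ k : ULift.{u} ℕ, Ideal.span {f} ⊓ Hi k ≠ ⊥ → dist (r k.down) c < 1 := by
        intro k hk
        obtain ⟨h₁, hh₁, hh₁0⟩ := Submodule.exists_mem_ne_zero_of_ne_bot hk
        obtain ⟨hhs, hhU⟩ := Submodule.mem_inf.mp hh₁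
        obtain ⟨a, ha⟩ := Ideal.mem_span_singleton'.mp hhs
        have : ∃ x, h₁ x ≠ 0 := by
          by_contra hall
          push_neg at hall
          exact hh₁0 (ContinuousMap.ext fun x => (hall x).trans rfl)
        obtain ⟨x, hx⟩ := this
        have hfx : f x ≠ 0 := by
          intro hfx0
          apply hx
          rw [← ha, ContinuousMap.mul_apply, hfx0, mul_zero]
        have hxW : x ∈ W := by
          by_contra hxW
          exact hfx (hf0 x hxW)
        have hxU : x ∈ U k.down := by
          by_contra hxU
          exact hx (mem_idealOfSet.mp hhU hxU)
        exact hWU k.down ⟨x, hxW, hxU⟩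
      have hik := key i hi
      have hjk := key j hj
      have : dist (r i.down) (r j.down) ≤ dist (r i.down) c + dist c (r j.down) :=
        dist_triangle _ _ _
      rw [dist_comm c] at this
      by_contra hijne
      have hne : i.down ≠ j.down := fun hdd => hijne (ULift.ext i j hdd)
      have := hgap2 i.down j.down hne
      linarith

end Core


section Equiv

variable {X : Type*} [TopologicalSpace X] {𝕜 : Type*} [RCLike 𝕜]

theorem betaExt_norm_le (f : X →ᵇ 𝕜) (p : StoneCech X) : ‖betaExt f p‖ ≤ ‖f‖ := by
  haveI : CompactSpace (Metric.closedBall (0 : 𝕜) ‖f‖) :=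
    isCompact_iff_compactSpace.mp (isCompact_closedBall 0 ‖f‖)
  have h := (stoneCechExtend (betaExt_aux f) p).2
  rw [Metric.mem_closedBall, dist_zero_right] at h
  exact h

/-- The canonical ring isomorphism `C_B(X) ≃ C(βX, 𝕜)`. -/
noncomputable def betaEquiv : (X →ᵇ 𝕜) ≃+* C(StoneCech X, 𝕜) where
  toFun f := ⟨betaExt f, continuous_betaExt f⟩
  invFun g := (mkOfCompact g).compContinuous ⟨stoneCechUnit, continuous_stoneCechUnit⟩
  left_inv f := by
    ext x
    exact betaExt_unit f x
  right_inv g := by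
    ext p
    have h := DenseRange.equalizer denseRange_stoneCechUnit
      (continuous_betaExt ((mkOfCompact g).compContinuous
        ⟨stoneCechUnit, continuous_stoneCechUnit⟩)) (map_continuous g)
      (funext fun x => by
        rw [Function.comp_apply, Function.comp_apply, betaExt_unit]; rfl)
    exact congrFun h p
  map_add' f g := by
    ext p
    have h := DenseRange.equalizer denseRange_stoneCechUnit
      (continuous_betaExt (f + g))
      ((continuous_betaExt f).add (continuous_betaExt g))
      (funext fun x => by
        simp only [Function.comp_apply, Pi.add_apply, betaExt_unit]
        rfl)
    exact congrFun h p
  map_mul' f g := by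
    ext p
    have h := DenseRange.equalizer denseRange_stoneCechUnit
      (continuous_betaExt (f * g))
      ((continuous_betaExt f).mul (continuous_betaExt g))
      (funext fun x => by
        simp only [Function.comp_apply, Pi.mul_apply, betaExt_unit]
        rfl)
    exact congrFun h p

theorem betaEquiv_apply (f : X →ᵇ 𝕜) (p : StoneCech X) :
    (betaEquiv f : C(StoneCech X, 𝕜)) p = betaExt f p := rfl

theorem betaEquiv_norm (f : X →ᵇ 𝕜) : ‖(betaEquiv f : C(StoneCech X, 𝕜))‖ = ‖f‖ := by
  refine le_antisymm ?_ ?_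
  · exact ContinuousMap.norm_le _ (norm_nonneg f) |>.mpr fun p => betaExt_norm_le f p
  · refine (f.norm_le (norm_nonneg _)).mpr fun x => ?_
    rw [show f x = betaExt f (stoneCechUnit x) from (betaExt_unit f x).symm]
    exact (betaEquiv f : C(StoneCech X, 𝕜)).norm_coe_le_norm (stoneCechUnit x)

theorem betaEquiv_isometry :
    Isometry (betaEquiv : (X →ᵇ 𝕜) → C(StoneCech X, 𝕜)) := by
  refine Isometry.of_dist_eq fun f g => ?_
  rw [dist_eq_norm, dist_eq_norm, ← map_sub, betaEquiv_norm]

theorem betaEquiv_continuous : Continuous (betaEquiv : (X →ᵇ 𝕜) → C(StoneCech X, 𝕜)) :=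
  betaEquiv_isometry.continuous

theorem betaEquiv_symm_continuous :
    Continuous ((betaEquiv : (X →ᵇ 𝕜) ≃+* C(StoneCech X, 𝕜)).symm) := by
  have h : Isometry ((betaEquiv : (X →ᵇ 𝕜) ≃+* C(StoneCech X, 𝕜)).symm) := by
    refine Isometry.of_dist_eq fun f g => ?_
    rw [← betaEquiv_isometry.dist_eq (betaEquiv.symm f) (betaEquiv.symm g),
      RingEquiv.apply_symm_apply, RingEquiv.apply_symm_apply]
  exact h.continuous

theorem lambdaSet_eq (H : Ideal (X →ᵇ 𝕜)) :
    lambdaSet H = ContinuousMap.setOfIdeal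
      (Ideal.map ((betaEquiv : (X →ᵇ 𝕜) ≃+* C(StoneCech X, 𝕜)) : (X →ᵇ 𝕜) →+* C(StoneCech X, 𝕜)) H) := by
  ext p
  simp only [lambdaSet, Set.mem_iUnion, Set.mem_setOf_eq]
  rw [ContinuousMap.mem_setOfIdeal]
  constructor
  · rintro ⟨g, hg, hgp⟩
    exact ⟨betaEquiv g, Ideal.mem_map_of_mem _ hg, hgp⟩
  · rintro ⟨h, hh, hhp⟩
    obtain ⟨g, hg, rfl⟩ := (Ideal.mem_map_of_equiv betaEquiv h).mp hh
    exact ⟨g, hg, hhp⟩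

theorem map_betaEquiv_closed {H : Ideal (X →ᵇ 𝕜)} (hcl : IsClosed (H : Set (X →ᵇ 𝕜))) :
    IsClosed ((Ideal.map ((betaEquiv : (X →ᵇ 𝕜) ≃+* C(StoneCech X, 𝕜)) : (X →ᵇ 𝕜) →+* C(StoneCech X, 𝕜)) H :
      Ideal C(StoneCech X, 𝕜)) : Set C(StoneCech X, 𝕜)) := by
  have hset : ((Ideal.map ((betaEquiv : (X →ᵇ 𝕜) ≃+* C(StoneCech X, 𝕜)) : (X →ᵇ 𝕜) →+* C(StoneCech X, 𝕜)) H :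
      Ideal C(StoneCech X, 𝕜)) : Set C(StoneCech X, 𝕜)) =
      (betaEquiv : (X →ᵇ 𝕜) ≃+* C(StoneCech X, 𝕜)) '' (H : Set (X →ᵇ 𝕜)) := by
    ext h
    simp only [SetLike.mem_coe, Set.mem_image]
    exact (Ideal.mem_map_of_equiv betaEquiv h).trans (by tauto)
  rw [hset]
  have hpre : (betaEquiv : (X →ᵇ 𝕜) ≃+* C(StoneCech X, 𝕜)) '' (H : Set (X →ᵇ 𝕜)) =
      ⇑(betaEquiv : (X →ᵇ 𝕜) ≃+* C(StoneCech X, 𝕜)).symm ⁻¹' (H : Set (X →ᵇ 𝕜)) := by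
    ext h
    constructor
    · rintro ⟨g, hg, rfl⟩
      simpa using hg
    · intro hh
      exact ⟨betaEquiv.symm h, hh, by simp⟩
  rw [hpre]
  exact hcl.preimage betaEquiv_symm_continuous

end Equiv


/-- For a Tychonoff space `X` and a non-vanishing closed ideal `H` of `C_B(X)`: `sp(H)` is
pseudocompact iff `H` has no subideal which is an (internal) direct sum `⨁_{i∈I} H_i` of an
infinite faithfully indexed collection of closed subideals of `H` such that for every maximal
closed subideal `M` of `H` there is `f ∈ H \ M` with `⟨f⟩ ∩ H_i = 0` for all but at most one
`i ∈ I`. -/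
theorem spectrum_pseudocompact_iff {X : Type u} [TopologicalSpace X] [T35Space X]
    {𝕜 : Type*} [RCLike 𝕜] (H : Ideal (X →ᵇ 𝕜))
    (hcl : IsClosed (H : Set (X →ᵇ 𝕜))) (hnv : ∀ x : X, ∃ h ∈ H, h x ≠ 0) :
    Pseudocompact (lambdaSet H) ↔
      ¬ ∃ (I : Type u) (Hi : I → Ideal (X →ᵇ 𝕜)),
          Infinite I ∧ Function.Injective Hi ∧
          (∀ i, IsClosed ((Hi i : Set (X →ᵇ 𝕜)))) ∧ (∀ i, Hi i ≤ H) ∧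
          (∀ i₀ : I, Hi i₀ ⊓ (⨆ i ∈ {i : I | i ≠ i₀}, Hi i) = ⊥) ∧
          (∀ M : Ideal (X →ᵇ 𝕜), IsClosed (M : Set (X →ᵇ 𝕜)) → M ≤ H → M ≠ H →
            (∀ N : Ideal (X →ᵇ 𝕜),
              IsClosed (N : Set (X →ᵇ 𝕜)) → N ≤ H → N ≠ H → M ≤ N → N = M) →
            ∃ f ∈ H, f ∉ M ∧
              {i : I | Ideal.span {f} ⊓ Hi i ≠ ⊥}.Subsingleton) := by
  classical
  have hec : Continuous (betaEquiv : (X →ᵇ 𝕜) → C(StoneCech X, 𝕜)) := betaEquiv_continuous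
  have hec' : Continuous ((betaEquiv : (X →ᵇ 𝕜) ≃+* C(StoneCech X, 𝕜)).symm) :=
    betaEquiv_symm_continuous
  set e : (X →ᵇ 𝕜) ≃+* C(StoneCech X, 𝕜) := betaEquiv with he
  set H' : Ideal C(StoneCech X, 𝕜) :=
    Ideal.map (e : (X →ᵇ 𝕜) →+* C(StoneCech X, 𝕜)) H with hH'
  have hcl' : IsClosed (H' : Set C(StoneCech X, 𝕜)) := map_betaEquiv_closed hcl
  have hlam : lambdaSet H = ContinuousMap.setOfIdeal H' := lambdaSet_eq H
  have hcond : Cond.{u} H ↔ Cond.{u} H' := by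
    constructor
    · exact cond_map e hec hec' H
    · intro hc
      have h2 := cond_map e.symm hec' (by simpa using hec) H' hc
      rwa [hH', Ideal.map_of_equiv] at h2
  have key : Pseudocompact (ContinuousMap.setOfIdeal H') ↔ ¬ Cond.{u} H' := by
    constructor
    · intro hp hc
      exact not_pseudo_of_cond H' hcl' hc hp
    · intro hnc
      by_contra hnp
      exact hnc (cond_of_not_pseudo H' hcl' hnp)
  rw [hlam, key]
  exact not_congr hcond.symm
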